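/- Let R be a semilocal commutative ring with 2 invertible, (A, σ) a ring with involution over R, and (P, f) a unimodular (−1)-hermitian space over (R, id_R) — that is, P a finitely generated projective R-module with a unimodular alternating bilinear form f : P × P → R (f(x,y) = −f(y,x)). Then (P, f) is hyperbolic. -/

import Mathlib

open Module TensorProduct

attribute [local instance] Ideal.Quotient.field


lemma exists_dual_family (R : Type*) [CommRing R] (P : Type*) [AddCommGroup P] [Module R P]
    [Module.Finite R P] [Module.Projective R P] :
    ∃ (n : ℕ) (xs : Fin n → P) (φs : Fin n → (P →ₗ[R] R)),
      ∀ p : P, ∑ i, φs i p • xs i = p := by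
  obtain ⟨n, q, g, hq, -, hqg⟩ := Module.Finite.exists_comp_eq_id_of_projective R P
  refine ⟨n, fun i => q (Pi.single i 1), fun i => (LinearMap.proj i) ∘ₗ g, fun p => ?_⟩
  have h1 : (∑ x, g p x • (Pi.single x 1 : Fin n → R)) = g p := by
    ext j
    simp [Pi.single_apply, Finset.sum_apply]
  calc ∑ x, (LinearMap.proj x ∘ₗ g) p • q (Pi.single x 1)
      = q (∑ x, g p x • (Pi.single x 1 : Fin n → R)) := by
        rw [map_sum]; simp [map_smul]
    _ = p := by rw [h1, ← LinearMap.comp_apply, hqg, LinearMap.id_apply]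

lemma exists_trace_idem {R : Type*} [CommRing R] {P : Type*} [AddCommGroup P] [Module R P]
    [Module.Finite R P] [Module.Projective R P] (f : P →ₗ[R] P →ₗ[R] R)
    (hsurj : Function.Surjective f) :
    ∃ e : R, e * e = e ∧ (∀ p : P, e • p = p) ∧
      ∀ m : Ideal R, e ∉ m → ∃ x y : P, f x y ∉ m := by
  obtain ⟨n, xs, φs, hdual⟩ := exists_dual_family R P
  set T : Ideal R := Ideal.span (Set.range fun ij : Fin n × Fin n => φs ij.1 (xs ij.2)) with hT
  have hgen : ∀ i j, φs i (xs j) ∈ T := fun i j =>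
    Ideal.subset_span ⟨(i, j), rfl⟩
  have hkey : ∀ (p : P) (i : Fin n), φs i p ∈ T := by
    intro p i
    have : φs i p = ∑ j, φs j p * φs i (xs j) := by
      conv_lhs => rw [← hdual p]
      rw [map_sum]
      simp [smul_eq_mul, mul_comm]
    rw [this]
    exact Ideal.sum_mem _ fun j _ => Ideal.mul_mem_left _ _ (hgen i j)
  have hTT : T ≤ T • T := by
    rw [Ideal.smul_eq_mul, hT, Ideal.span_le]
    rintro - ⟨⟨i, j⟩, rfl⟩
    dsimp only
    have : φs i (xs j) = ∑ k, φs k (xs j) * φs i (xs k) := by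
      conv_lhs => rw [← hdual (xs j)]
      rw [map_sum]
      simp [smul_eq_mul, mul_comm]
    rw [this]
    exact Ideal.sum_mem _ fun k _ => Ideal.mul_mem_mul (hgen k j) (hgen i k)
  obtain ⟨r, hr1, hr0⟩ :=
    Submodule.exists_sub_one_mem_and_smul_eq_zero_of_fg_of_le_smul T T
      (Submodule.fg_span (Set.finite_range _)) hTT
  have heT : 1 - r ∈ T := by simpa using T.neg_mem hr1
  refine ⟨1 - r, ?_, ?_, ?_⟩
  · have h := hr0 _ heT
    rw [smul_eq_mul] at h
    linear_combination -h
  · intro p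
    have hrp : r • p = 0 := by
      conv_lhs => rw [← hdual p]
      rw [Finset.smul_sum]
      refine Finset.sum_eq_zero fun i _ => ?_
      rw [smul_smul, ← smul_eq_mul, hr0 _ (hkey p i), zero_smul]
    rw [sub_smul, one_smul, hrp, sub_zero]
  · intro m hm
    by_contra hc
    push_neg at hc
    apply hm
    refine (Ideal.span_le.mpr ?_) heT
    rintro - ⟨⟨i, j⟩, rfl⟩
    dsimp only
    obtain ⟨p, hp⟩ := hsurj (φs i)
    rw [← hp]
    exact hc p (xs j)


lemma rank_le_of_retract {R : Type*} [CommRing R] {P : Type*} [AddCommGroup P] [Module R P]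
    [Module.Finite R P] (W : Submodule R P) (π : P →ₗ[R] W) (hπ : ∀ w : W, π w = w)
    (m : Ideal R) [m.IsMaximal] :
    Module.finrank (R ⧸ m) ((R ⧸ m) ⊗[R] W) ≤ Module.finrank (R ⧸ m) ((R ⧸ m) ⊗[R] P) ∧
    ∀ (x : P) (ψ : P →ₗ[R] R), π x = 0 → ψ x ∉ m →
      Module.finrank (R ⧸ m) ((R ⧸ m) ⊗[R] W) < Module.finrank (R ⧸ m) ((R ⧸ m) ⊗[R] P) := by
  classical
  have hcomp : π ∘ₗ W.subtype = LinearMap.id := by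
    ext w
    exact congrArg Subtype.val (hπ w)
  have hcomp' : (π.baseChange (R ⧸ m)) ∘ₗ ((W.subtype).baseChange (R ⧸ m)) = LinearMap.id := by
    rw [← LinearMap.baseChange_comp, hcomp, LinearMap.baseChange_id]
  have hinj : Function.Injective ((W.subtype).baseChange (R ⧸ m)) :=
    LinearMap.injective_of_comp_eq_id _ _ hcomp'
  have hr : Module.finrank (R ⧸ m) ((R ⧸ m) ⊗[R] W)
      = Module.finrank (R ⧸ m) (LinearMap.range ((W.subtype).baseChange (R ⧸ m))) :=
    (LinearEquiv.ofInjective _ hinj).finrank_eq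
  constructor
  · rw [hr]
    exact Submodule.finrank_le _
  · intro x ψ hx hψ
    have hxne : (1 : R ⧸ m) ⊗ₜ[R] x ≠ 0 := by
      intro hx0
      have hΦ : (TensorProduct.lift ((LinearMap.mul R (R ⧸ m)).compl₂
            ((Algebra.linearMap R (R ⧸ m)) ∘ₗ ψ))) ((1:R ⧸ m) ⊗ₜ[R] x)
          = Ideal.Quotient.mk m (ψ x) := by
        simp [Algebra.linearMap_apply]
      rw [hx0, map_zero] at hΦ
      exact hψ (Ideal.Quotient.eq_zero_iff_mem.mp hΦ.symm)
    have hne : LinearMap.range ((W.subtype).baseChange (R ⧸ m)) ≠ ⊤ := by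
      intro htop
      have : (1 : R ⧸ m) ⊗ₜ[R] x ∈ LinearMap.range ((W.subtype).baseChange (R ⧸ m)) :=
        htop ▸ Submodule.mem_top
      obtain ⟨z, hz⟩ := this
      have hz0 : z = 0 := by
        have h2 := congrArg (π.baseChange (R ⧸ m)) hz
        rw [← LinearMap.comp_apply, hcomp', LinearMap.id_apply, LinearMap.baseChange_tmul,
          hx] at h2
        simpa using h2
      rw [hz0, map_zero] at hz
      exact hxne hz.symm
    rw [hr]
    exact Submodule.finrank_lt hne

lemma exists_good_pair {R : Type*} [CommRing R] [Finite (MaximalSpectrum R)]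
    {P : Type*} [AddCommGroup P] [Module R P] [Module.Finite R P] [Module.Projective R P]
    (f : P →ₗ[R] P →ₗ[R] R) (hsurj : Function.Surjective f) :
    ∃ (e : R) (x y : P), e * e = e ∧ (∀ p : P, e • p = p) ∧ f x y = e := by
  classical
  obtain ⟨e, he2, heP, hem⟩ := exists_trace_idem f hsurj
  haveI := Fintype.ofFinite (MaximalSpectrum R)
  -- CRT elements
  have crt : ∀ i : MaximalSpectrum R, ∃ r : R,
      r - 1 ∈ i.asIdeal ∧ ∀ j : MaximalSpectrum R, j ≠ i → r ∈ j.asIdeal := by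
    intro i
    have hpick : ∀ j : MaximalSpectrum R, ∃ b : R,
        (j ≠ i → b ∈ j.asIdeal ∧ b - 1 ∈ i.asIdeal) ∧ (j = i → b = 1) := by
      intro j
      by_cases hj : j = i
      · exact ⟨1, fun h => absurd hj h, fun _ => rfl⟩
      · have hne : j.asIdeal ≠ i.asIdeal := fun h => hj (MaximalSpectrum.ext h)
        have hsup : j.asIdeal ⊔ i.asIdeal = ⊤ :=
          Ideal.IsMaximal.coprime_of_ne j.isMaximal i.isMaximal hne
        have h1 : (1:R) ∈ j.asIdeal ⊔ i.asIdeal := hsup ▸ Submodule.mem_top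
        obtain ⟨b, hb, c, hc, hbc⟩ := Submodule.mem_sup.mp h1
        refine ⟨b, fun _ => ⟨hb, ?_⟩, fun h => absurd h hj⟩
        have : b - 1 = -c := by linear_combination hbc
        rw [this]
        exact i.asIdeal.neg_mem hc
    choose b hb1 hb2 using hpick
    refine ⟨∏ j, b j, ?_, ?_⟩
    · have hmk : (Ideal.Quotient.mk i.asIdeal) (∏ j, b j) = 1 := by
        rw [map_prod]
        refine Finset.prod_eq_one fun j _ => ?_
        by_cases hj : j = i
        · rw [hb2 j hj, map_one]
        · rw [show (1 : R ⧸ i.asIdeal) = Ideal.Quotient.mk i.asIdeal 1 from (map_one _).symm]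
          exact Ideal.Quotient.eq.mpr (hb1 j hj).2
      exact Ideal.Quotient.eq.mp (by rw [hmk, map_one])
    · intro j hj
      rw [← Finset.prod_erase_mul Finset.univ b (Finset.mem_univ j)]
      exact j.asIdeal.mul_mem_left _ (hb1 j hj).1
  choose r hr1 hr2 using crt
  -- pairs
  have hpair : ∀ i : MaximalSpectrum R, ∃ xy : P × P,
      e ∉ i.asIdeal → f xy.1 xy.2 ∉ i.asIdeal := by
    intro i
    by_cases hi : e ∈ i.asIdeal
    · exact ⟨(0,0), fun h => absurd hi h⟩
    · obtain ⟨x, y, h⟩ := hem i.asIdeal hi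
      exact ⟨(x,y), fun _ => h⟩
  choose xy hxy using hpair
  set I₀ : Finset (MaximalSpectrum R) := Finset.univ.filter (fun i => e ∉ i.asIdeal) with hI₀
  set x0 : P := ∑ i ∈ I₀, r i • (xy i).1 with hx0
  set y0 : P := ∑ i ∈ I₀, r i • (xy i).2 with hy0
  have hexp : f x0 y0 = ∑ i ∈ I₀, r i * ∑ j ∈ I₀, r j * f (xy i).1 (xy j).2 := by
    simp only [hx0, hy0, map_sum, LinearMap.sum_apply, map_smul, LinearMap.smul_apply,
      smul_eq_mul, Finset.mul_sum]
    rw [Finset.sum_comm]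
    exact Finset.sum_congr rfl fun i _ => Finset.sum_congr rfl fun j _ => by ring
  -- the key non-membership
  have ha : ∀ k : MaximalSpectrum R, e ∉ k.asIdeal → f x0 y0 ∉ k.asIdeal := by
    intro k hk
    have hkI : k ∈ I₀ := by rw [hI₀]; exact Finset.mem_filter.mpr ⟨Finset.mem_univ _, hk⟩
    have hqr0 : ∀ i : MaximalSpectrum R, i ≠ k →
        Ideal.Quotient.mk k.asIdeal (r i) = 0 :=
      fun i hik => Ideal.Quotient.eq_zero_iff_mem.mpr (hr2 i k (Ne.symm hik))
    have hqr1 : Ideal.Quotient.mk k.asIdeal (r k) = 1 := by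
      rw [show (1 : R ⧸ k.asIdeal) = Ideal.Quotient.mk k.asIdeal 1 from (map_one _).symm]
      exact Ideal.Quotient.eq.mpr (hr1 k)
    have hq : Ideal.Quotient.mk k.asIdeal (f x0 y0)
        = Ideal.Quotient.mk k.asIdeal (f (xy k).1 (xy k).2) := by
      rw [hexp, map_sum]
      rw [Finset.sum_eq_single_of_mem k hkI (fun i _ hik => by
        rw [map_mul, hqr0 i hik, zero_mul])]
      rw [map_mul, hqr1, one_mul, map_sum]
      rw [Finset.sum_eq_single_of_mem k hkI (fun j _ hjk => by
        rw [map_mul, hqr0 j hjk, zero_mul])]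
      rw [map_mul, hqr1, one_mul]
    intro hmem
    exact (hxy k hk) (Ideal.Quotient.eq_zero_iff_mem.mp
      (by rw [← hq]; exact Ideal.Quotient.eq_zero_iff_mem.mpr hmem))
  -- the unit
  have hea : e * f x0 y0 = f x0 y0 := by
    conv_rhs => rw [← heP x0]
    rw [map_smul, LinearMap.smul_apply, smul_eq_mul]
  have hbu : IsUnit (f x0 y0 + (1 - e)) := by
    by_contra hnb
    obtain ⟨m, hm, hle⟩ := Ideal.exists_le_maximal (Ideal.span {f x0 y0 + (1 - e)})
      (by rwa [Ne, Ideal.span_singleton_eq_top])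
    have hbm : f x0 y0 + (1 - e) ∈ m := hle (Ideal.mem_span_singleton_self _)
    by_cases hem' : e ∈ m
    · have ham : f x0 y0 ∈ m := by
        rw [← hea]
        exact m.mul_mem_right _ hem'
      have h1em : (1:R) - e ∈ m := by
        have := m.sub_mem hbm ham
        simpa using this
      have h1m : (1:R) ∈ m := by
        have := m.add_mem h1em hem'
        simpa using this
      exact hm.ne_top ((Ideal.eq_top_iff_one m).mpr h1m)
    · have h1em : (1:R) - e ∈ m := by
        have h0 : e * (1 - e) = 0 := by linear_combination -he2
        have := hm.isPrime.mem_or_mem (show e * (1-e) ∈ m by rw [h0]; exact m.zero_mem)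
        tauto
      have ham : f x0 y0 ∈ m := by
        have := m.sub_mem hbm h1em
        simpa using this
      exact (ha ⟨m, hm⟩ hem') ham
  -- conclude
  refine ⟨e, (↑hbu.unit⁻¹ : R) • x0, y0, he2, heP, ?_⟩
  have hcb : (↑hbu.unit⁻¹ : R) * (f x0 y0 + (1 - e)) = 1 := IsUnit.val_inv_mul hbu
  rw [map_smul, LinearMap.smul_apply, smul_eq_mul]
  linear_combination e * hcb - (↑hbu.unit⁻¹ : R) * hea + (↑hbu.unit⁻¹ : R) * he2

theorem hyperbolic_aux {R : Type*} [CommRing R] [Finite (MaximalSpectrum R)]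
    (h2 : IsUnit (2 : R)) (n : ℕ) :
    ∀ {P : Type v} [AddCommGroup P] [Module R P] [_i3 : Module.Finite R P]
      [_i4 : Module.Projective R P]
      (f : P →ₗ[R] P →ₗ[R] R), (∀ x y, f x y = -f y x) → Function.Bijective f →
      (∑ᶠ m : MaximalSpectrum R,
        Module.finrank (R ⧸ m.asIdeal) ((R ⧸ m.asIdeal) ⊗[R] P)) ≤ n →
      ∃ L M : Submodule R P, IsCompl L M ∧
        (∀ x ∈ L, ∀ y ∈ L, f x y = 0) ∧ ∀ x ∈ M, ∀ y ∈ M, f x y = 0 := by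
  induction n using Nat.strong_induction_on with
  | _ n IH =>
  intro P _ _ _ _ f hskew hunimod hn
  classical
  have halt : ∀ p : P, f p p = 0 := by
    intro p
    have h := hskew p p
    have h2' : (2:R) * f p p = 0 := by linear_combination h
    exact by
      have := h2.mul_right_eq_zero.mp h2'
      exact this
  obtain ⟨e, x, y, he2, heP, hexy⟩ := exists_good_pair f hunimod.surjective
  by_cases he0 : e = 0
  · have hP0 : ∀ p : P, p = 0 := fun p => by rw [← heP p, he0, zero_smul]
    refine ⟨⊥, ⊤, isCompl_bot_top, ?_, ?_⟩
    · intro a ha b hb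
      rw [(Submodule.mem_bot R).mp ha, map_zero, LinearMap.zero_apply]
    · intro a _ b _
      rw [hP0 a, map_zero, LinearMap.zero_apply]
  -- main case
  have habs : ∀ p q : P, e * f p q = f p q := fun p q => by
    conv_rhs => rw [← heP p]
    rw [map_smul, LinearMap.smul_apply, smul_eq_mul]
  have hfyx : f y x = -e := by rw [hskew y x, hexy]
  set hmap : P →ₗ[R] P := ((f x).smulRight y) - ((f y).smulRight x) with hmapdef
  have hmap_apply : ∀ p, hmap p = f x p • y - f y p • x := fun p => rfl
  have hx1 : hmap x = x := by
    rw [hmap_apply, halt x, hfyx]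
    simp [heP x]
  have hy1 : hmap y = y := by
    rw [hmap_apply, hexy, halt y]
    simp [heP y]
  have hfxh : ∀ p, f x (hmap p) = f x p := by
    intro p
    rw [hmap_apply, map_sub, map_smul, map_smul]
    simp only [hexy, halt x, smul_eq_mul, mul_zero, sub_zero]
    linear_combination habs x p
  have hfyh : ∀ p, f y (hmap p) = f y p := by
    intro p
    rw [hmap_apply, map_sub, map_smul, map_smul]
    simp only [halt y, hfyx, smul_eq_mul, mul_zero, zero_sub, mul_neg]
    linear_combination habs y p
  have hhh : ∀ p, hmap (hmap p) = hmap p := fun p => by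
    rw [hmap_apply (hmap p), hfxh p, hfyh p, hmap_apply p]
  set W := LinearMap.ker hmap with hWdef
  have hmemW : ∀ p : P, p - hmap p ∈ W := fun p => by
    rw [hWdef, LinearMap.mem_ker, map_sub, hhh, sub_self]
  set π : P →ₗ[R] W := (LinearMap.id - hmap).codRestrict W
    (fun p => by simpa using hmemW p) with hπdef
  have hπcoe : ∀ p : P, ((π p : W) : P) = p - hmap p := fun p => rfl
  have hπ : ∀ w : W, π w = w := fun w => by
    apply Subtype.ext
    rw [hπcoe]
    have hw : hmap w = 0 := LinearMap.mem_ker.mp w.2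
    rw [hw, sub_zero]
  have hπx : π x = 0 := by
    apply Subtype.ext
    rw [hπcoe, hx1, sub_self]
    rfl
  have hπsurj : Function.Surjective π := fun w => ⟨w, hπ w⟩
  haveI : Module.Finite R W := Module.Finite.of_surjective π hπsurj
  haveI : Module.Projective R W :=
    Module.Projective.of_split W.subtype π (LinearMap.ext fun w => hπ w)
  have hxW : ∀ p ∈ W, f x p = 0 := fun p hp => by
    have h := hfxh p
    rw [LinearMap.mem_ker.mp hp, map_zero] at h
    exact h.symm
  have hyW : ∀ p ∈ W, f y p = 0 := fun p hp => by
    have h := hfyh p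
    rw [LinearMap.mem_ker.mp hp, map_zero] at h
    exact h.symm
  set g : W →ₗ[R] W →ₗ[R] R := f.compl₁₂ W.subtype W.subtype with hgdef
  have hg_apply : ∀ a b : W, g a b = f a b := fun a b => rfl
  have hgskew : ∀ a b : W, g a b = - g b a := fun a b => hskew (a : P) (b : P)
  have hfHW : ∀ (p : P), ∀ w ∈ W, f (hmap p) w = 0 := by
    intro p w hw
    rw [hmap_apply, map_sub, LinearMap.sub_apply, map_smul, map_smul,
      LinearMap.smul_apply, LinearMap.smul_apply, hxW w hw, hyW w hw,
      smul_zero, smul_zero, sub_zero]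
  have hWf : ∀ c : W, (∀ w : W, f (c : P) (w : P) = 0) → c = 0 := by
    intro c hc
    have hfc : f (c : P) = 0 := by
      ext p
      have hdec : p = hmap p + (p - hmap p) := by abel
      rw [LinearMap.zero_apply]
      conv_lhs => rw [hdec]
      rw [map_add]
      have h1 : f (c : P) (hmap p) = 0 := by
        rw [hmap_apply, map_sub, map_smul, map_smul]
        have hcx : f (c : P) x = 0 := by rw [hskew, hxW _ c.2, neg_zero]
        have hcy : f (c : P) y = 0 := by rw [hskew, hyW _ c.2, neg_zero]
        rw [hcx, hcy, smul_zero, smul_zero, sub_zero]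
      have h2 : f (c : P) (p - hmap p) = 0 := hc ⟨p - hmap p, hmemW p⟩
      rw [h1, h2, add_zero]
    have : (c : P) = 0 := hunimod.injective (by rw [hfc, map_zero])
    exact Subtype.ext this
  have hginj : Function.Injective g := by
    intro a b hab
    have hz : g (a - b) = 0 := by rw [map_sub, hab, sub_self]
    have : a - b = 0 := hWf (a - b) (fun w => by
      have : g (a - b) w = 0 := by rw [hz, LinearMap.zero_apply]
      exact this)
    exact sub_eq_zero.mp this
  have hgsurj : Function.Surjective g := by
    intro ψ
    obtain ⟨p, hp⟩ := hunimod.surjective (ψ ∘ₗ π)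
    refine ⟨π p, ?_⟩
    ext w
    have hc1 : g (π p) w = f (p - hmap p) (w : P) := by rw [hg_apply, hπcoe]
    rw [hc1, map_sub, LinearMap.sub_apply, hfHW p w w.2, sub_zero]
    have : f p (w : P) = (ψ ∘ₗ π) (w : P) := by rw [hp]
    rw [this, LinearMap.comp_apply, hπ w]
  -- strict rank decrease at a maximal ideal not containing e
  obtain ⟨m0I, hm0max, hm0le⟩ := Ideal.exists_le_maximal (Ideal.span {1 - e}) (by
    rw [Ne, Ideal.span_singleton_eq_top]
    intro hu
    obtain ⟨v, hv⟩ := hu.exists_right_inv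
    apply he0
    calc e = e * ((1-e)*v) := by rw [hv, mul_one]
      _ = (e * (1-e)) * v := by ring
      _ = 0 := by
          rw [show e * (1-e) = 0 by linear_combination -he2, zero_mul]
    )
  haveI := hm0max
  have hm0e : e ∉ m0I := fun hmem => hm0max.ne_top (by
    rw [Ideal.eq_top_iff_one]
    have h1e : (1 : R) - e ∈ m0I := hm0le (Ideal.mem_span_singleton_self _)
    simpa using m0I.add_mem h1e hmem)
  haveI := Fintype.ofFinite (MaximalSpectrum R)
  have hle : ∀ m : MaximalSpectrum R,
      Module.finrank (R ⧸ m.asIdeal) ((R ⧸ m.asIdeal) ⊗[R] W)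
        ≤ Module.finrank (R ⧸ m.asIdeal) ((R ⧸ m.asIdeal) ⊗[R] P) := fun m =>
    (rank_le_of_retract W π hπ m.asIdeal).1
  have hlt : Module.finrank (R ⧸ (⟨m0I, hm0max⟩ : MaximalSpectrum R).asIdeal)
        ((R ⧸ (⟨m0I, hm0max⟩ : MaximalSpectrum R).asIdeal) ⊗[R] W)
      < Module.finrank (R ⧸ (⟨m0I, hm0max⟩ : MaximalSpectrum R).asIdeal)
        ((R ⧸ (⟨m0I, hm0max⟩ : MaximalSpectrum R).asIdeal) ⊗[R] P) := by
    refine (rank_le_of_retract W π hπ m0I).2 x (f.flip y) hπx ?_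
    rw [LinearMap.flip_apply, hexy]
    exact hm0e
  have hNW : (∑ᶠ m : MaximalSpectrum R,
      Module.finrank (R ⧸ m.asIdeal) ((R ⧸ m.asIdeal) ⊗[R] W)) < n := by
    calc (∑ᶠ m : MaximalSpectrum R,
        Module.finrank (R ⧸ m.asIdeal) ((R ⧸ m.asIdeal) ⊗[R] W))
        = ∑ m : MaximalSpectrum R,
            Module.finrank (R ⧸ m.asIdeal) ((R ⧸ m.asIdeal) ⊗[R] W) :=
          finsum_eq_sum_of_fintype _
      _ < ∑ m : MaximalSpectrum R,
            Module.finrank (R ⧸ m.asIdeal) ((R ⧸ m.asIdeal) ⊗[R] P) :=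
          Finset.sum_lt_sum (fun i _ => hle i) ⟨⟨m0I, hm0max⟩, Finset.mem_univ _, hlt⟩
      _ = ∑ᶠ m : MaximalSpectrum R,
            Module.finrank (R ⧸ m.asIdeal) ((R ⧸ m.asIdeal) ⊗[R] P) :=
          (finsum_eq_sum_of_fintype _).symm
      _ ≤ n := hn
  obtain ⟨L', M', hLM', hL'iso, hM'iso⟩ :=
    IH _ hNW g hgskew ⟨hginj, hgsurj⟩ le_rfl
  -- assemble
  set L : Submodule R P := Submodule.span R {x} ⊔ L'.map W.subtype with hLdef
  set M : Submodule R P := Submodule.span R {y} ⊔ M'.map W.subtype with hMdef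
  have hLW : L'.map W.subtype ≤ W := Submodule.map_subtype_le W L'
  have hMW : M'.map W.subtype ≤ W := Submodule.map_subtype_le W M'
  have hmemL : ∀ p ∈ L, ∃ (a : R) (w : P), w ∈ L'.map W.subtype ∧ p = a • x + w := by
    intro p hp
    obtain ⟨u, hu, v, hv, huv⟩ := Submodule.mem_sup.mp hp
    obtain ⟨a, ha⟩ := Submodule.mem_span_singleton.mp hu
    exact ⟨a, v, hv, by rw [← huv, ← ha]⟩
  have hmemM : ∀ p ∈ M, ∃ (c : R) (w : P), w ∈ M'.map W.subtype ∧ p = c • y + w := by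
    intro p hp
    obtain ⟨u, hu, v, hv, huv⟩ := Submodule.mem_sup.mp hp
    obtain ⟨c, hc⟩ := Submodule.mem_span_singleton.mp hu
    exact ⟨c, v, hv, by rw [← huv, ← hc]⟩
  have hisoL : ∀ p ∈ L, ∀ q ∈ L, f p q = 0 := by
    intro p hp q hq
    obtain ⟨a, w, hw, rfl⟩ := hmemL p hp
    obtain ⟨a', w', hw', rfl⟩ := hmemL q hq
    have h1 : f x w' = 0 := hxW w' (hLW hw')
    have h2 : f w x = 0 := by rw [hskew, hxW w (hLW hw), neg_zero]
    have h3 : f w w' = 0 := by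
      obtain ⟨w0, hw0, hww0⟩ := Submodule.mem_map.mp hw
      obtain ⟨w0', hw0', hww0'⟩ := Submodule.mem_map.mp hw'
      rw [← hww0, ← hww0']
      exact hL'iso w0 hw0 w0' hw0'
    have hexp1 : f (a • x + w) = a • (f x) + f w := by rw [map_add, map_smul]
    simp only [hexp1, LinearMap.add_apply, LinearMap.smul_apply, map_add, map_smul,
      halt x, h1, h2, h3, smul_eq_mul, smul_zero, mul_zero, add_zero, zero_add, smul_add]
  have hisoM : ∀ p ∈ M, ∀ q ∈ M, f p q = 0 := by
    intro p hp q hq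
    obtain ⟨c, w, hw, rfl⟩ := hmemM p hp
    obtain ⟨c', w', hw', rfl⟩ := hmemM q hq
    have h1 : f y w' = 0 := hyW w' (hMW hw')
    have h2 : f w y = 0 := by rw [hskew, hyW w (hMW hw), neg_zero]
    have h3 : f w w' = 0 := by
      obtain ⟨w0, hw0, hww0⟩ := Submodule.mem_map.mp hw
      obtain ⟨w0', hw0', hww0'⟩ := Submodule.mem_map.mp hw'
      rw [← hww0, ← hww0']
      exact hM'iso w0 hw0 w0' hw0'
    have hexp1 : f (c • y + w) = c • (f y) + f w := by rw [map_add, map_smul]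
    simp only [hexp1, LinearMap.add_apply, LinearMap.smul_apply, map_add, map_smul,
      halt y, h1, h2, h3, smul_eq_mul, smul_zero, mul_zero, add_zero, zero_add, smul_add]
  have hWsup : L'.map W.subtype ⊔ M'.map W.subtype = W := by
    rw [← Submodule.map_sup, hLM'.codisjoint.eq_top, Submodule.map_subtype_top]
  have hsup : L ⊔ M = ⊤ := by
    rw [eq_top_iff]
    intro p _
    have hpw : p - hmap p ∈ L'.map W.subtype ⊔ M'.map W.subtype := by
      rw [hWsup]; exact hmemW p
    obtain ⟨u, hu, v, hv, huv⟩ := Submodule.mem_sup.mp hpw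
    have h5 : (u + v) + hmap p = p := by
      rw [huv]; abel
    have hdecomp : ((-(f y p)) • x + u) + ((f x p) • y + v) = p := by
      conv_rhs => rw [← h5, hmap_apply]
      module
    rw [← hdecomp]
    refine Submodule.add_mem _ (Submodule.mem_sup_left ?_) (Submodule.mem_sup_right ?_)
    · exact Submodule.add_mem _
        (Submodule.mem_sup_left (Submodule.smul_mem _ _ (Submodule.subset_span rfl)))
        (Submodule.mem_sup_right hu)
    · exact Submodule.add_mem _
        (Submodule.mem_sup_left (Submodule.smul_mem _ _ (Submodule.subset_span rfl)))
        (Submodule.mem_sup_right hv)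
  have hdisj : Disjoint L M := by
    rw [Submodule.disjoint_def]
    intro p hpL hpM
    obtain ⟨a, w, hw, rfl⟩ := hmemL p hpL
    obtain ⟨c, w', hw', heq⟩ := hmemM _ hpM
    have hwy : f w y = 0 := by rw [hskew, hyW w (hLW hw), neg_zero]
    have hwx : f w x = 0 := by rw [hskew, hxW w (hLW hw), neg_zero]
    have hw'y : f w' y = 0 := by rw [hskew, hyW w' (hMW hw'), neg_zero]
    have hw'x : f w' x = 0 := by rw [hskew, hxW w' (hMW hw'), neg_zero]
    have hval1 : f (a • x + w) y = a * e := by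
      rw [map_add, map_smul, LinearMap.add_apply, LinearMap.smul_apply, hexy, hwy,
        smul_eq_mul, add_zero]
    have hval2 : f (c • y + w') y = 0 := by
      rw [map_add, map_smul, LinearMap.add_apply, LinearMap.smul_apply, halt y, hw'y,
        smul_eq_mul, mul_zero, add_zero]
    have hae : a * e = 0 := by rw [← hval1, heq, hval2]
    have hax : a • x = 0 := by
      have : a • x = (a * e) • x := by rw [← smul_smul, heP x]
      rw [this, hae, zero_smul]
    have hval3 : f (a • x + w) x = 0 := by
      rw [map_add, map_smul, LinearMap.add_apply, LinearMap.smul_apply, halt x, hwx,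
        smul_eq_mul, mul_zero, add_zero]
    have hval4 : f (c • y + w') x = -(c * e) := by
      rw [map_add, map_smul, LinearMap.add_apply, LinearMap.smul_apply, hfyx, hw'x,
        smul_eq_mul, mul_neg, add_zero]
    have hce : c * e = 0 := by
      have h := hval4
      rw [← heq, hval3] at h
      linear_combination h
    have hcy : c • y = 0 := by
      have : c • y = (c * e) • y := by rw [← smul_smul, heP y]
      rw [this, hce, zero_smul]
    have hww' : w = w' := by
      have := heq
      rw [hax, hcy, zero_add, zero_add] at this
      exact this
    have hwmem : w ∈ (L' ⊓ M').map W.subtype := by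
      rw [Submodule.map_inf _ (Submodule.injective_subtype W)]
      exact ⟨hw, by rw [hww']; exact hw'⟩
    rw [hLM'.disjoint.eq_bot, Submodule.map_bot, Submodule.mem_bot] at hwmem
    rw [hax, hwmem, zero_add]
  exact ⟨L, M, ⟨hdisj, codisjoint_iff.mpr hsup⟩, hisoL, hisoM⟩


/-- Over a semilocal commutative ring `R` with `2` invertible, every unimodular
alternating bilinear form on a finitely generated projective `R`-module is hyperbolic. -/
theorem stmt_15 {R P : Type*} [CommRing R] (h2 : IsUnit (2 : R))
    [Finite (MaximalSpectrum R)]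
    [AddCommGroup P] [Module R P] [Module.Finite R P] [Module.Projective R P]
    (f : P →ₗ[R] P →ₗ[R] R)
    (hskew : ∀ x y, f x y = -f y x)
    (hunimod : Function.Bijective f) :
    ∃ L M : Submodule R P, IsCompl L M ∧
      (∀ x ∈ L, ∀ y ∈ L, f x y = 0) ∧ ∀ x ∈ M, ∀ y ∈ M, f x y = 0 := by
  exact hyperbolic_aux h2 _ f hskew hunimod le_rfl
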